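/- arXiv:1709.06120 — 2 statements merged into one kernel-verified Lean document; each statement's English description precedes it below -/
import Mathlib

section
/- Let (Ω, μ) be a measure space, f : Ω → [0,∞) measurable, and q ∈ (0,1) ∪ (1,∞). Suppose that for every λ > 0: (i) ∫_{{f < λ}} (λ − f)^{q−1} dμ < ∞, and (ii) μ({λ ≤ f < λ+h}) = O(h) as h → 0⁺ if q ∈ (0,1), respectively μ({λ ≤ f < λ+h}) = O(1) if q > 1. Then the function G(λ) = ∫_Ω (λ − f)_+^q dμ is differentiable on (0,∞) with G'(λ) = q ∫_{{f < λ}} (λ − f)^{q−1} dμ. -/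
open Real MeasureTheory Filter Set Topology
open scoped NNReal


private lemma rpow_mvt {q b a : ℝ} (hb : 0 < b) (hab : b < a) :
    ∃ ξ, b < ξ ∧ ξ < a ∧ a ^ q - b ^ q = q * ξ ^ (q - 1) * (a - b) := by
  have hcont : ContinuousOn (fun u : ℝ => u ^ q) (Icc b a) := fun u hu =>
    (Real.continuousAt_rpow_const u q (Or.inl (hb.trans_le hu.1).ne')).continuousWithinAt
  have hderiv : ∀ u ∈ Ioo b a, HasDerivAt (fun u : ℝ => u ^ q) (q * u ^ (q - 1)) u := fun u hu =>
    Real.hasDerivAt_rpow_const (Or.inl (hb.trans hu.1).ne')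
  obtain ⟨ξ, hξ, h⟩ := exists_hasDerivAt_eq_slope (fun u : ℝ => u ^ q) _ hab hcont hderiv
  refine ⟨ξ, hξ.1, hξ.2, ?_⟩
  rw [h, div_mul_cancel₀ _ (sub_ne_zero.2 hab.ne')]

private lemma rpow_sub_le_q1 {q b a : ℝ} (hq0 : 0 < q) (hq : q ≤ 1) (hb : 0 < b) (hba : b ≤ a) :
    a ^ q - b ^ q ≤ q * b ^ (q - 1) * (a - b) := by
  rcases eq_or_lt_of_le hba with h | h
  · simp [h]
  · obtain ⟨ξ, hξ1, hξ2, heq⟩ := rpow_mvt (q := q) hb h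
    rw [heq]
    have h1 : ξ ^ (q - 1) ≤ b ^ (q - 1) :=
      Real.rpow_le_rpow_of_nonpos hb hξ1.le (by linarith)
    exact mul_le_mul_of_nonneg_right (mul_le_mul_of_nonneg_left h1 hq0.le) (by linarith)

private lemma rpow_sub_le_qg1 {q b a : ℝ} (hq : 1 ≤ q) (hb : 0 ≤ b) (hba : b ≤ a) :
    a ^ q - b ^ q ≤ q * a ^ (q - 1) * (a - b) := by
  have hq0 : (0:ℝ) < q := lt_of_lt_of_le one_pos hq
  rcases hb.eq_or_lt with h0 | h0
  · rw [← h0] at hba ⊢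
    rw [Real.zero_rpow hq0.ne', sub_zero, sub_zero]
    rcases hba.eq_or_lt with h | ha
    · simp [← h, Real.zero_rpow hq0.ne']
    · have h1 : a ^ q = a ^ (q - 1) * a := by
        rw [← Real.rpow_add_one ha.ne' (q - 1), sub_add_cancel]
      rw [h1]
      nlinarith [mul_nonneg (Real.rpow_nonneg ha.le (q - 1)) ha.le]
  · rcases eq_or_lt_of_le hba with h | h
    · simp [h]
    · obtain ⟨ξ, hξ1, hξ2, heq⟩ := rpow_mvt (q := q) h0 h
      rw [heq]
      have h1 : ξ ^ (q - 1) ≤ a ^ (q - 1) :=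
        Real.rpow_le_rpow (le_of_lt (h0.trans hξ1)) hξ2.le (by linarith)
      exact mul_le_mul_of_nonneg_right (mul_le_mul_of_nonneg_left h1 hq0.le) (by linarith)

private lemma rpow_subadd {q x y : ℝ} (hq0 : 0 < q) (hq : q ≤ 1) (hx : 0 ≤ x) (hy : 0 ≤ y) :
    (x + y) ^ q ≤ x ^ q + y ^ q := by
  have h := NNReal.rpow_add_le_add_rpow x.toNNReal y.toNNReal hq0.le hq
  have hxy : ((x.toNNReal : ℝ)) = x := Real.coe_toNNReal x hx
  have hyy : ((y.toNNReal : ℝ)) = y := Real.coe_toNNReal y hy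
  have h2 := NNReal.coe_le_coe.2 h
  rw [NNReal.coe_rpow, NNReal.coe_add, NNReal.coe_add, NNReal.coe_rpow, NNReal.coe_rpow,
    hxy, hyy] at h2
  exact h2

private lemma rpow_le_mul_rpow_sub_one {q u c : ℝ} (hq0 : 0 < q) (hq1 : q ≠ 1)
    (hu : 0 ≤ u) (huc : u ≤ c) : u ^ q ≤ c * u ^ (q - 1) := by
  rcases hu.eq_or_lt with h0 | h0
  · rw [← h0, Real.zero_rpow hq0.ne', Real.zero_rpow (sub_ne_zero.2 hq1), mul_zero]
  · have h1 : u ^ q = u ^ (q - 1) * u := by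
      rw [← Real.rpow_add_one h0.ne' (q - 1), sub_add_cancel]
    rw [h1, mul_comm c]
    exact mul_le_mul_of_nonneg_left huc (Real.rpow_nonneg h0.le _)

private lemma hasDerivAt_pp {q c l : ℝ} (hcl : c < l) :
    HasDerivAt (fun y : ℝ => (max (y - c) 0) ^ q) (q * (l - c) ^ (q - 1)) l := by
  have h1 : HasDerivAt (fun y : ℝ => (y - c) ^ q) (1 * q * (l - c) ^ (q - 1)) l :=
    ((hasDerivAt_id l).sub_const c).rpow_const (Or.inl (sub_pos.2 hcl).ne')
  rw [one_mul] at h1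
  apply h1.congr_of_eventuallyEq
  filter_upwards [Ioi_mem_nhds hcl] with y hy
  rw [max_eq_left (sub_nonneg.2 (le_of_lt hy))]

private lemma half_rpow_bound {q a : ℝ} (ha : 0 < a) :
    (a / 2) ^ (q - 1) = 2 ^ (1 - q) * a ^ (q - 1) := by
  rw [Real.div_rpow ha.le (by norm_num), show (1 - q) = -(q - 1) by ring,
    Real.rpow_neg (by norm_num), div_eq_mul_inv, mul_comm]

/-- Left-side pointwise bound. -/
private lemma lemA {q a t : ℝ} (hq0 : 0 < q) (hq1 : q ≠ 1) (ha : 0 < a) (ht : 0 < t) :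
    0 ≤ (a ^ q - (max (a - t) 0) ^ q) / t ∧
      (a ^ q - (max (a - t) 0) ^ q) / t ≤ (q + q * 2 ^ (1 - q) + 2 ^ (1 - q)) * a ^ (q - 1) := by
  have hm0 : 0 ≤ max (a - t) 0 := le_max_right _ _
  have hma : max (a - t) 0 ≤ a := max_le (by linarith) ha.le
  have haq1 : 0 ≤ a ^ (q - 1) := Real.rpow_nonneg ha.le _
  have h2q : (0:ℝ) ≤ 2 ^ (1 - q) := Real.rpow_nonneg (by norm_num) _
  constructor
  · exact div_nonneg (sub_nonneg.2 (Real.rpow_le_rpow hm0 hma hq0.le)) ht.le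
  rw [div_le_iff₀ ht]
  rcases lt_or_gt_of_ne hq1 with hqlt | hqgt
  · -- q < 1
    rcases le_or_gt a (2 * t) with hnear | hfar
    · -- near: X ≤ t^q and t^(q-1) ≤ 2^(1-q) a^(q-1)
      have hX : a ^ q - (max (a - t) 0) ^ q ≤ t ^ q := by
        rcases le_or_gt a t with h | h
        · rw [max_eq_right (by linarith)]
          rw [Real.zero_rpow hq0.ne', sub_zero]
          exact Real.rpow_le_rpow ha.le h hq0.le
        · rw [max_eq_left (by linarith)]
          have := rpow_subadd hq0 hqlt.le (x := a - t) (y := t) (by linarith) ht.le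
          rw [sub_add_cancel] at this
          linarith
      have ht1 : t ^ q = t ^ (q - 1) * t := by
        rw [← Real.rpow_add_one ht.ne' (q - 1), sub_add_cancel]
      have ht2 : t ^ (q - 1) ≤ (a / 2) ^ (q - 1) :=
        Real.rpow_le_rpow_of_nonpos (by linarith) (by linarith) (by linarith)
      rw [half_rpow_bound ha] at ht2
      calc a ^ q - (max (a - t) 0) ^ q ≤ t ^ q := hX
        _ = t ^ (q - 1) * t := ht1
        _ ≤ (2 ^ (1 - q) * a ^ (q - 1)) * t := mul_le_mul_of_nonneg_right ht2 ht.le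
        _ ≤ (q + q * 2 ^ (1 - q) + 2 ^ (1 - q)) * a ^ (q - 1) * t := by
            apply mul_le_mul_of_nonneg_right _ ht.le
            nlinarith [mul_nonneg (mul_nonneg hq0.le h2q) haq1, mul_nonneg hq0.le haq1]
    · -- far: a - t > t > 0
      have hat : 0 < a - t := by linarith
      rw [max_eq_left hat.le]
      have hX := rpow_sub_le_q1 hq0 hqlt.le hat (by linarith : a - t ≤ a)
      rw [show a - (a - t) = t by ring] at hX
      have h1 : (a - t) ^ (q - 1) ≤ (a / 2) ^ (q - 1) :=
        Real.rpow_le_rpow_of_nonpos (by linarith) (by linarith) (by linarith)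
      rw [half_rpow_bound ha] at h1
      calc a ^ q - (a - t) ^ q ≤ q * (a - t) ^ (q - 1) * t := hX
        _ ≤ q * (2 ^ (1 - q) * a ^ (q - 1)) * t := by
            exact mul_le_mul_of_nonneg_right (mul_le_mul_of_nonneg_left h1 hq0.le) ht.le
        _ ≤ (q + q * 2 ^ (1 - q) + 2 ^ (1 - q)) * a ^ (q - 1) * t := by
            apply mul_le_mul_of_nonneg_right _ ht.le
            nlinarith [mul_nonneg hq0.le haq1, mul_nonneg h2q haq1]
  · -- q > 1
    have hX : a ^ q - (max (a - t) 0) ^ q ≤ q * a ^ (q - 1) * t := by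
      rcases le_or_gt a t with h | h
      · rw [max_eq_right (by linarith), Real.zero_rpow hq0.ne', sub_zero]
        have h1 : a ^ q = a ^ (q - 1) * a := by
          rw [← Real.rpow_add_one ha.ne' (q - 1), sub_add_cancel]
        rw [h1]
        nlinarith [mul_nonneg haq1 ht.le, mul_le_mul_of_nonneg_left h haq1,
          mul_nonneg (mul_nonneg (by linarith : (0:ℝ) ≤ q - 1) haq1) ht.le]
      · rw [max_eq_left (by linarith)]
        have := rpow_sub_le_qg1 hqgt.le (b := a - t) (by linarith) (by linarith : a - t ≤ a)
        rw [show a - (a - t) = t by ring] at this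
        exact this
    calc a ^ q - (max (a - t) 0) ^ q ≤ q * a ^ (q - 1) * t := hX
      _ ≤ (q + q * 2 ^ (1 - q) + 2 ^ (1 - q)) * a ^ (q - 1) * t := by
          apply mul_le_mul_of_nonneg_right _ ht.le
          nlinarith [mul_nonneg (mul_nonneg hq0.le h2q) haq1]

/-- Right-side pointwise bound on the main region. -/
private lemma lemB {q a t : ℝ} (hq0 : 0 < q) (ha : 0 < a) (ht : 0 < t) (ht1 : t ≤ 1) :
    0 ≤ ((a + t) ^ q - a ^ q) / t ∧
      ((a + t) ^ q - a ^ q) / t ≤ (q + q * 2 ^ (q - 1)) * a ^ (q - 1) + q * 2 ^ (q - 1) := by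
  have haq1 : 0 ≤ a ^ (q - 1) := Real.rpow_nonneg ha.le _
  have h2q : (0:ℝ) ≤ 2 ^ (q - 1) := Real.rpow_nonneg (by norm_num) _
  constructor
  · exact div_nonneg (sub_nonneg.2 (Real.rpow_le_rpow ha.le (by linarith) hq0.le)) ht.le
  rw [div_le_iff₀ ht]
  rcases le_or_gt q 1 with hqle | hqgt
  · have hX := rpow_sub_le_q1 hq0 hqle ha (by linarith : a ≤ a + t)
    rw [show a + t - a = t by ring] at hX
    calc (a + t) ^ q - a ^ q ≤ q * a ^ (q - 1) * t := hX
      _ ≤ ((q + q * 2 ^ (q - 1)) * a ^ (q - 1) + q * 2 ^ (q - 1)) * t := by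
          apply mul_le_mul_of_nonneg_right _ ht.le
          nlinarith [mul_nonneg (mul_nonneg hq0.le h2q) haq1, mul_nonneg hq0.le h2q]
  · have hX := rpow_sub_le_qg1 hqgt.le (b := a) ha.le (by linarith : a ≤ a + t)
    rw [show a + t - a = t by ring] at hX
    have h1 : (a + t) ^ (q - 1) ≤ (a + 1) ^ (q - 1) :=
      Real.rpow_le_rpow (by linarith) (by linarith) (by linarith)
    have h2 : (a + 1) ^ (q - 1) ≤ 2 ^ (q - 1) * a ^ (q - 1) + 2 ^ (q - 1) := by
      rcases le_or_gt a 1 with h | h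
      · have : (a + 1) ^ (q - 1) ≤ 2 ^ (q - 1) :=
          Real.rpow_le_rpow (by linarith) (by linarith) (by linarith)
        nlinarith [mul_nonneg h2q haq1]
      · have h3 : (a + 1) ^ (q - 1) ≤ (2 * a) ^ (q - 1) :=
          Real.rpow_le_rpow (by linarith) (by linarith) (by linarith)
        rw [Real.mul_rpow (by norm_num) ha.le] at h3
        linarith
    calc (a + t) ^ q - a ^ q ≤ q * (a + t) ^ (q - 1) * t := hX
      _ ≤ q * (2 ^ (q - 1) * a ^ (q - 1) + 2 ^ (q - 1)) * t := by
          apply mul_le_mul_of_nonneg_right _ ht.le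
          exact mul_le_mul_of_nonneg_left (h1.trans h2) hq0.le
      _ = (q * 2 ^ (q - 1) * a ^ (q - 1) + q * 2 ^ (q - 1)) * t := by ring
      _ ≤ ((q + q * 2 ^ (q - 1)) * a ^ (q - 1) + q * 2 ^ (q - 1)) * t := by
          apply mul_le_mul_of_nonneg_right _ ht.le
          nlinarith [mul_nonneg hq0.le haq1]

set_option maxHeartbeats 1000000

/-- Differentiability of `G(λ) = ∫ (λ − f)_+^q dμ` (Proposition "key" of the paper). -/
theorem deriv_of_plus_power_integral
    {Ω : Type*} [MeasurableSpace Ω] (μ : Measure Ω)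
    (f : Ω → ℝ) (hfmeas : Measurable f) (hfnonneg : ∀ x, 0 ≤ f x)
    (q : ℝ) (hq0 : 0 < q) (hq1 : q ≠ 1)
    (hint : ∀ lam > (0:ℝ),
      IntegrableOn (fun x => (lam - f x) ^ (q - 1)) {x | f x < lam} μ)
    (hO1 : q < 1 → ∀ lam > (0:ℝ), ∃ C : ℝ, ∀ h > (0:ℝ),
      μ {x | lam ≤ f x ∧ f x < lam + h} ≤ ENNReal.ofReal (C * h))
    (hO2 : 1 < q → ∀ lam > (0:ℝ), ∃ C : ℝ, ∀ h > (0:ℝ),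
      μ {x | lam ≤ f x ∧ f x < lam + h} ≤ ENNReal.ofReal C) :
    ∀ lam > (0:ℝ),
      HasDerivAt (fun l : ℝ => ∫ x, (max (l - f x) 0) ^ q ∂μ)
        (q * ∫ x in {x | f x < lam}, (lam - f x) ^ (q - 1) ∂μ) lam := by
  intro lam hlam
  set A : Set Ω := {x | f x < lam} with hAdef
  have hA : MeasurableSet A := hfmeas measurableSet_Iio
  -- measurability of the integrands
  have hφm : ∀ l : ℝ, Measurable fun x => (max (l - f x) 0) ^ q := by
    intro l; measurability
  -- integrability of the integrands
  have hφint : ∀ l : ℝ, Integrable (fun x => (max (l - f x) 0) ^ q) μ := by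
    intro l
    rcases le_or_gt l 0 with hl | hl
    · have he : (fun x => (max (l - f x) 0) ^ q) = fun _ => (0:ℝ) := funext fun x => by
        rw [max_eq_right (by linarith [hfnonneg x]), Real.zero_rpow hq0.ne']
      rw [he]; exact integrable_zero _ _ _
    · have hBm : MeasurableSet {x | f x < l} := hfmeas measurableSet_Iio
      have h2 : IntegrableOn (fun x => (l - f x) ^ q) {x | f x < l} μ := by
        refine ((hint l hl).const_mul l).mono' ?_ ?_
        · have : Measurable fun x => (l - f x) ^ q := by measurability
          exact this.aestronglyMeasurable
        · filter_upwards [ae_restrict_mem hBm] with x hx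
          have hx' : f x < l := hx
          rw [Real.norm_eq_abs, abs_of_nonneg (Real.rpow_nonneg (by linarith) _)]
          exact rpow_le_mul_rpow_sub_one hq0 hq1 (by linarith) (by linarith [hfnonneg x])
      have he : (fun x => (max (l - f x) 0) ^ q)
          = Set.indicator {x | f x < l} (fun x => (l - f x) ^ q) := by
        funext x
        by_cases hx : f x < l
        · rw [Set.indicator_of_mem (show x ∈ {x | f x < l} from hx), max_eq_left (by linarith)]
        · rw [Set.indicator_of_notMem (show x ∉ {x | f x < l} from hx),
            max_eq_right (by linarith [not_lt.1 hx]), Real.zero_rpow hq0.ne']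
      rw [he]
      exact h2.integrable_indicator hBm
  -- finiteness of μ A
  have hμA : μ A < ⊤ := by
    have h2l := hint (2 * lam) (by linarith)
    set c0 := min (lam ^ (q - 1)) ((2 * lam) ^ (q - 1)) with hc0def
    have hc0 : 0 < c0 :=
      lt_min (Real.rpow_pos_of_pos hlam _) (Real.rpow_pos_of_pos (by linarith) _)
    have hfin := h2l.measure_ge_lt_top hc0
    have hsub : A ⊆ {x | c0 ≤ (2 * lam - f x) ^ (q - 1)} := by
      intro x hx
      have hx' : f x < lam := hx
      simp only [Set.mem_setOf_eq]
      have h2 : 2 * lam - f x ≤ 2 * lam := by linarith [hfnonneg x]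
      rcases le_or_gt q 1 with h | h
      · exact le_trans (min_le_right _ _)
          (Real.rpow_le_rpow_of_nonpos (by linarith) h2 (by linarith))
      · exact le_trans (min_le_left _ _)
          (Real.rpow_le_rpow hlam.le (by linarith) (by linarith))
    have hAsub : A ⊆ {x | f x < 2 * lam} := fun x hx =>
      lt_trans (show f x < lam from hx) (by linarith)
    have hres : μ.restrict {x | f x < 2 * lam} A = μ A := by
      rw [Measure.restrict_apply hA, Set.inter_eq_left.2 hAsub]
    rw [← hres]
    exact lt_of_le_of_lt (measure_mono hsub) hfin
  -- the difference quotient integrand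
  set S : ℝ → Ω → ℝ :=
    fun l x => ((max (l - f x) 0) ^ q - (max (lam - f x) 0) ^ q) / (l - lam) with hSdef
  have hSint : ∀ l : ℝ, Integrable (S l) μ :=
    fun l => ((hφint l).sub (hφint lam)).div_const _
  have hSmeas : ∀ l : ℝ, AEStronglyMeasurable (S l) μ :=
    fun l => (((hφm l).sub (hφm lam)).div_const _).aestronglyMeasurable
  -- pointwise derivative limits
  have hlimA : ∀ x, f x < lam → ∀ (F : Filter ℝ), F ≤ 𝓝[≠] lam →
      Tendsto (fun l => S l x) F (𝓝 (q * (lam - f x) ^ (q - 1))) := by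
    intro x hx F hF
    have hd := hasDerivAt_pp (q := q) (c := f x) hx
    have hs := hasDerivAt_iff_tendsto_slope.1 hd
    refine (hs.mono_left hF).congr fun l => ?_
    rw [slope_def_field]
  -- left limit
  have hgeq : ∫ x, A.indicator (fun x => q * (lam - f x) ^ (q - 1)) x ∂μ
      = q * ∫ x in A, (lam - f x) ^ (q - 1) ∂μ := by
    rw [integral_indicator hA, integral_const_mul]
  have hleft : Tendsto (fun l => ∫ x, S l x ∂μ) (𝓝[<] lam)
      (𝓝 (q * ∫ x in A, (lam - f x) ^ (q - 1) ∂μ)) := by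
    rw [← hgeq]
    refine tendsto_integral_filter_of_dominated_convergence
      (A.indicator fun x => (q + q * 2 ^ (1 - q) + 2 ^ (1 - q)) * (lam - f x) ^ (q - 1))
      (Eventually.of_forall hSmeas) ?_ ?_ ?_
    · filter_upwards [self_mem_nhdsWithin] with l hl
      have hl' : l < lam := hl
      refine ae_of_all _ fun x => ?_
      by_cases hx : f x < lam
      · have ha : 0 < lam - f x := by linarith
        have htt : 0 < lam - l := by linarith
        have hrw : S l x
            = ((lam - f x) ^ q - (max ((lam - f x) - (lam - l)) 0) ^ q) / (lam - l) := by
          simp only [hSdef]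
          rw [max_eq_left ha.le, show (lam - f x) - (lam - l) = l - f x by ring,
            show l - lam = -(lam - l) by ring, div_neg, ← neg_div, neg_sub]
        rw [hrw, Set.indicator_of_mem (show x ∈ A from hx)]
        have key := lemA hq0 hq1 ha htt
        rw [Real.norm_eq_abs, abs_of_nonneg key.1]
        exact key.2
      · have hx' : lam ≤ f x := not_lt.1 hx
        have h1 : max (l - f x) 0 = 0 := max_eq_right (by linarith)
        have h2 : max (lam - f x) 0 = 0 := max_eq_right (by linarith)
        simp only [hSdef, h1, h2, Real.zero_rpow hq0.ne', sub_self, zero_div]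
        rw [Set.indicator_of_notMem (show x ∉ A from hx), norm_zero]
    · exact IntegrableOn.integrable_indicator ((hint lam hlam).const_mul _) hA
    · refine ae_of_all _ fun x => ?_
      by_cases hx : f x < lam
      · rw [Set.indicator_of_mem (show x ∈ A from hx)]
        exact hlimA x hx _ (nhdsWithin_mono _ fun y hy => ne_of_lt hy)
      · have hx' : lam ≤ f x := not_lt.1 hx
        rw [Set.indicator_of_notMem (show x ∉ A from hx)]
        refine Tendsto.congr' ?_ tendsto_const_nhds
        filter_upwards [self_mem_nhdsWithin] with l hl
        have hl' : l < lam := hl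
        have h1 : max (l - f x) 0 = 0 := max_eq_right (by linarith)
        have h2 : max (lam - f x) 0 = 0 := max_eq_right (by linarith)
        simp only [hSdef, h1, h2, Real.zero_rpow hq0.ne', sub_self, zero_div]
  -- right limit : split the integral
  have hsplit : ∀ l : ℝ, (∫ x, S l x ∂μ) = (∫ x in A, S l x ∂μ) + ∫ x in Aᶜ, S l x ∂μ :=
    fun l => (integral_add_compl hA (hSint l)).symm
  have hT1 : Tendsto (fun l => ∫ x in A, S l x ∂μ) (𝓝[>] lam)
      (𝓝 (q * ∫ x in A, (lam - f x) ^ (q - 1) ∂μ)) := by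
    have hgeq2 : ∫ x in A, q * (lam - f x) ^ (q - 1) ∂μ
        = q * ∫ x in A, (lam - f x) ^ (q - 1) ∂μ := integral_const_mul _ _
    rw [← hgeq2]
    refine tendsto_integral_filter_of_dominated_convergence
      (fun x => (q + q * 2 ^ (q - 1)) * (lam - f x) ^ (q - 1) + q * 2 ^ (q - 1))
      (Eventually.of_forall fun l => (hSmeas l).restrict) ?_ ?_ ?_
    · filter_upwards [Ioo_mem_nhdsGT_of_mem (left_mem_Ico.2 (lt_add_one lam))] with l hl
      refine (ae_restrict_iff' hA).2 (ae_of_all _ fun x hx => ?_)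
      have hx' : f x < lam := hx
      have ha : 0 < lam - f x := by linarith
      have ht : 0 < l - lam := by linarith [hl.1]
      have ht1 : l - lam ≤ 1 := by linarith [hl.2]
      have hrw : S l x = (((lam - f x) + (l - lam)) ^ q - (lam - f x) ^ q) / (l - lam) := by
        simp only [hSdef]
        rw [max_eq_left ha.le, max_eq_left (by linarith : (0:ℝ) ≤ l - f x),
          show l - f x = (lam - f x) + (l - lam) by ring]
      rw [hrw]
      have key := lemB hq0 ha ht ht1
      rw [Real.norm_eq_abs, abs_of_nonneg key.1]
      exact key.2
    · exact ((hint lam hlam).const_mul _).add (integrableOn_const hμA.ne)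
    · refine (ae_restrict_iff' hA).2 (ae_of_all _ fun x hx => ?_)
      exact hlimA x hx _ (nhdsWithin_mono _ fun y hy => ne_of_gt hy)
  have hT2 : Tendsto (fun l => ∫ x in Aᶜ, S l x ∂μ) (𝓝[>] lam) (𝓝 0) := by
    have hest : ∀ l, lam < l → ∀ M : ℝ, 0 ≤ M →
        μ {x | lam ≤ f x ∧ f x < l} ≤ ENNReal.ofReal M →
        (∫ x in Aᶜ, S l x ∂μ) ≤ (l - lam) ^ (q - 1) * M := by
      intro l hl M hM hμM
      have ht : 0 < l - lam := by linarith
      have hstripm : MeasurableSet {x | lam ≤ f x ∧ f x < l} :=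
        (hfmeas measurableSet_Ici).inter (hfmeas measurableSet_Iio)
      have hstripfin : μ {x | lam ≤ f x ∧ f x < l} < ⊤ :=
        lt_of_le_of_lt hμM ENNReal.ofReal_lt_top
      have hmono : ∫ x in Aᶜ, S l x ∂μ
          ≤ ∫ x in Aᶜ, ({x | lam ≤ f x ∧ f x < l}).indicator
              (fun _ => (l - lam) ^ (q - 1)) x ∂μ := by
        refine setIntegral_mono_on (hSint l).integrableOn
          (((integrable_indicator_iff hstripm).2
            (integrableOn_const hstripfin.ne)).integrableOn) hA.compl fun x hx => ?_
        have hx' : lam ≤ f x := not_lt.1 hx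
        have hφlam : max (lam - f x) 0 = 0 := max_eq_right (by linarith)
        by_cases hfl : f x < l
        · rw [Set.indicator_of_mem (show x ∈ {x | lam ≤ f x ∧ f x < l} from ⟨hx', hfl⟩)]
          simp only [hSdef, hφlam, Real.zero_rpow hq0.ne', sub_zero,
            max_eq_left (by linarith : (0:ℝ) ≤ l - f x)]
          rw [div_le_iff₀ ht]
          have h2 : (l - f x) ^ q ≤ (l - lam) ^ q :=
            Real.rpow_le_rpow (by linarith) (by linarith) hq0.le
          have h3 : (l - lam) ^ q = (l - lam) ^ (q - 1) * (l - lam) := by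
            rw [← Real.rpow_add_one ht.ne' (q - 1), sub_add_cancel]
          linarith
        · rw [Set.indicator_of_notMem
            (show x ∉ {x | lam ≤ f x ∧ f x < l} from fun hc => hfl hc.2)]
          have h1 : max (l - f x) 0 = 0 := max_eq_right (by linarith [not_lt.1 hfl])
          simp only [hSdef, h1, hφlam, Real.zero_rpow hq0.ne', sub_self, zero_div, le_refl]
      have hsub : {x | lam ≤ f x ∧ f x < l} ⊆ Aᶜ := fun x hx => not_lt.2 hx.1
      have hcomp : ∫ x in Aᶜ, ({x | lam ≤ f x ∧ f x < l}).indicator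
          (fun _ => (l - lam) ^ (q - 1)) x ∂μ
          = (μ {x | lam ≤ f x ∧ f x < l}).toReal * (l - lam) ^ (q - 1) := by
        rw [integral_indicator_const _ hstripm, measureReal_restrict_apply hstripm,
          Set.inter_eq_left.2 hsub, smul_eq_mul, measureReal_def]
      have htr : (μ {x | lam ≤ f x ∧ f x < l}).toReal ≤ M :=
        ENNReal.toReal_le_of_le_ofReal hM hμM
      calc (∫ x in Aᶜ, S l x ∂μ)
          ≤ (μ {x | lam ≤ f x ∧ f x < l}).toReal * (l - lam) ^ (q - 1) := by
            rw [← hcomp]; exact hmono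
        _ ≤ M * (l - lam) ^ (q - 1) :=
            mul_le_mul_of_nonneg_right htr (Real.rpow_nonneg ht.le _)
        _ = (l - lam) ^ (q - 1) * M := mul_comm _ _
    obtain ⟨C, p, hp, hbound⟩ : ∃ C p : ℝ, 0 < p ∧
        ∀ l ∈ Ioo lam (lam + 1), (∫ x in Aᶜ, S l x ∂μ) ≤ C * (l - lam) ^ p := by
      rcases lt_or_gt_of_ne hq1 with hqlt | hqgt
      · obtain ⟨C, hC⟩ := hO1 hqlt lam hlam
        refine ⟨|C|, q, hq0, fun l hl => ?_⟩
        have ht : 0 < l - lam := by linarith [hl.1]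
        have hμ := hC (l - lam) ht
        rw [show lam + (l - lam) = l by ring] at hμ
        have hμ' : μ {x | lam ≤ f x ∧ f x < l} ≤ ENNReal.ofReal (|C| * (l - lam)) :=
          le_trans hμ (ENNReal.ofReal_le_ofReal
            (mul_le_mul_of_nonneg_right (le_abs_self C) ht.le))
        calc (∫ x in Aᶜ, S l x ∂μ) ≤ (l - lam) ^ (q - 1) * (|C| * (l - lam)) :=
              hest l hl.1 _ (mul_nonneg (abs_nonneg C) ht.le) hμ'
          _ = |C| * ((l - lam) ^ (q - 1) * (l - lam)) := by ring
          _ = |C| * (l - lam) ^ q := by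
              rw [← Real.rpow_add_one ht.ne' (q - 1), sub_add_cancel]
      · obtain ⟨C, hC⟩ := hO2 hqgt lam hlam
        refine ⟨|C|, q - 1, by linarith, fun l hl => ?_⟩
        have ht : 0 < l - lam := by linarith [hl.1]
        have hμ := hC (l - lam) ht
        rw [show lam + (l - lam) = l by ring] at hμ
        have hμ' : μ {x | lam ≤ f x ∧ f x < l} ≤ ENNReal.ofReal |C| :=
          le_trans hμ (ENNReal.ofReal_le_ofReal (le_abs_self C))
        calc (∫ x in Aᶜ, S l x ∂μ) ≤ (l - lam) ^ (q - 1) * |C| :=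
              hest l hl.1 _ (abs_nonneg C) hμ'
          _ = |C| * (l - lam) ^ (q - 1) := mul_comm _ _
    have hnn : ∀ᶠ l in 𝓝[>] lam, 0 ≤ ∫ x in Aᶜ, S l x ∂μ := by
      filter_upwards [self_mem_nhdsWithin] with l hl
      have hl' : lam < l := hl
      refine setIntegral_nonneg hA.compl fun x _ => ?_
      have hφmono : (max (lam - f x) 0) ^ q ≤ (max (l - f x) 0) ^ q :=
        Real.rpow_le_rpow (le_max_right _ _) (max_le_max (by linarith) le_rfl) hq0.le
      exact div_nonneg (by linarith) (by linarith)
    have hub : ∀ᶠ l in 𝓝[>] lam, (∫ x in Aᶜ, S l x ∂μ) ≤ C * (l - lam) ^ p := by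
      filter_upwards [Ioo_mem_nhdsGT_of_mem (left_mem_Ico.2 (lt_add_one lam))] with l hl
      exact hbound l hl
    have hgl : Tendsto (fun l : ℝ => C * (l - lam) ^ p) (𝓝[>] lam) (𝓝 0) := by
      have h1 : Tendsto (fun l : ℝ => l - lam) (𝓝[>] lam) (𝓝[>] (0:ℝ)) := by
        refine tendsto_nhdsWithin_iff.2 ⟨?_, ?_⟩
        · have h0 := (continuous_sub_right lam).tendsto lam
          rw [sub_self] at h0
          exact h0.mono_left nhdsWithin_le_nhds
        · filter_upwards [self_mem_nhdsWithin] with l hl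
          exact sub_pos.2 (show lam < l from hl)
      have h3 : Tendsto (fun u : ℝ => u ^ p) (𝓝 (0:ℝ)) (𝓝 ((0:ℝ) ^ p)) :=
        (Real.continuousAt_rpow_const 0 p (Or.inr hp.le)).tendsto
      rw [Real.zero_rpow hp.ne'] at h3
      have h2 : Tendsto (fun u : ℝ => C * u ^ p) (𝓝[>] (0:ℝ)) (𝓝 0) := by
        simpa using ((h3.mono_left nhdsWithin_le_nhds).const_mul C)
      exact h2.comp h1
    exact squeeze_zero' hnn hub hgl
  have hright : Tendsto (fun l => ∫ x, S l x ∂μ) (𝓝[>] lam)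
      (𝓝 (q * ∫ x in A, (lam - f x) ^ (q - 1) ∂μ)) := by
    have hadd := hT1.add hT2
    rw [add_zero] at hadd
    exact hadd.congr fun l => (hsplit l).symm
  rw [hasDerivAt_iff_tendsto_slope]
  have hslope_eq : slope (fun l : ℝ => ∫ x, (max (l - f x) 0) ^ q ∂μ) lam
      = fun l => ∫ x, S l x ∂μ := by
    funext l
    rw [slope_def_field, ← integral_sub (hφint l) (hφint lam), ← integral_div]
  rw [hslope_eq, ← nhdsLT_sup_nhdsGT lam]
  exact Filter.tendsto_sup.2 ⟨hleft, hright⟩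
end

section
/- Let n ≥ 2, p > 1, 0 < r < p with r ≠ 1, and α, β, γ satisfy 1/r − γ/n > 0, 1/p − α/n > 0, 1 − β/n > 0, γ = (1+α)/r + ((p−1)/(pr))β, and 1 + α − β/p > 0. Then for λ > 0 the compactly supported function f(x) = (λ − |x|^{1+α−β/p})_+^{(p−1)/(p−r)} attains equality in the CKN inequality: ∫_{ℝ^n} |f|^r |x|^{−γr} dx = (r/(n−γr)) (∫_{ℝ^n} |∇f|^p |x|^{−αp} dx)^{1/p} (∫_{supp f} |f|^{p(r−1)/(p−1)} |x|^{−β} dx)^{(p−1)/p}. -/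
open Real MeasureTheory Set

set_option linter.unusedSectionVars false
set_option linter.unusedVariables false

lemma ckn_aux_hasDeriv {R σ m : ℝ} (hσ : 0 < σ) {x : ℝ} (hx0 : 0 < x) :
    HasDerivAt (fun t : ℝ => R ^ σ - t ^ σ - m * (R - t))
      (-(σ * x ^ (σ - 1)) - m * -1) x := by
  have h1 : HasDerivAt (fun t : ℝ => t ^ σ) (σ * x ^ (σ - 1)) x :=
    Real.hasDerivAt_rpow_const (Or.inl hx0.ne')
  exact (h1.const_sub (R ^ σ)).sub (((hasDerivAt_id x).const_sub R).const_mul m)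

lemma ckn_aux_lower {R σ : ℝ} (hR : 0 < R) (hσ : 0 < σ) :
    ∃ m > 0, ∀ t ∈ Set.Icc (R/2) R, m * (R - t) ≤ R ^ σ - t ^ σ := by
  have hR2 : (0:ℝ) < R / 2 := by linarith
  refine ⟨σ * min ((R/2) ^ (σ-1)) (R ^ (σ-1)), by positivity, ?_⟩
  set m := σ * min ((R/2) ^ (σ-1)) (R ^ (σ-1)) with hm
  have hk : AntitoneOn (fun t : ℝ => R ^ σ - t ^ σ - m * (R - t)) (Set.Icc (R/2) R) := by
    apply antitoneOn_of_deriv_nonpos (convex_Icc _ _)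
    · apply ContinuousOn.sub
      · exact continuousOn_const.sub (continuousOn_id.rpow_const
          (fun x hx => Or.inl (by have := hx.1; dsimp; nlinarith)))
      · fun_prop
    · intro x hx
      rw [interior_Icc] at hx
      exact (ckn_aux_hasDeriv hσ (lt_trans hR2 hx.1)).differentiableAt.differentiableWithinAt
    · intro x hx
      rw [interior_Icc] at hx
      have hx0 : 0 < x := lt_trans hR2 hx.1
      rw [(ckn_aux_hasDeriv hσ hx0).deriv]
      have hmin : min ((R/2) ^ (σ-1)) (R ^ (σ-1)) ≤ x ^ (σ - 1) := by
        rcases le_or_gt 1 σ with h1 | h1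
        · exact le_trans (min_le_left _ _)
            (Real.rpow_le_rpow hR2.le hx.1.le (by linarith))
        · exact le_trans (min_le_right _ _)
            (Real.rpow_le_rpow_of_nonpos hx0 hx.2.le (by linarith))
      have : m ≤ σ * x ^ (σ - 1) := by
        rw [hm]; exact mul_le_mul_of_nonneg_left hmin hσ.le
      linarith
  intro t ht
  have := hk ht (Set.right_mem_Icc.2 (by linarith)) ht.2
  simp only [sub_self, mul_zero, sub_zero] at this
  linarith

lemma ckn_aux_cont {R σ a b : ℝ} (hσ : 0 < σ) :
    ContinuousOn (fun t : ℝ => t ^ a * (R ^ σ - t ^ σ) ^ b) (Set.Ioo 0 R) := by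
  apply ContinuousOn.mul
  · exact continuousOn_id.rpow_const (fun x hx => Or.inl hx.1.ne')
  · apply ContinuousOn.rpow_const
    · exact continuousOn_const.sub (continuousOn_id.rpow_const
        (fun x hx => Or.inl hx.1.ne'))
    · intro x hx
      have : x ^ σ < R ^ σ := Real.rpow_lt_rpow hx.1.le hx.2 hσ
      exact Or.inl (by dsimp; linarith)

lemma ckn_aux_int {R σ a b : ℝ} (hR : 0 < R) (hσ : 0 < σ) (ha : -1 < a) (hb : -1 < b) :
    IntegrableOn (fun t => t ^ a * (R ^ σ - t ^ σ) ^ b) (Set.Ioo 0 R) := by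
  have hR2 : (0:ℝ) < R / 2 := by linarith
  have hsub : Set.Ioc (0:ℝ) (R/2) ∪ Set.Ioo (R/2) R = Set.Ioo 0 R :=
    Set.Ioc_union_Ioo_eq_Ioo (by linarith) (by linarith)
  rw [← hsub]
  rw [integrableOn_union]
  constructor
  · -- near 0
    have hXlb : ∀ t ∈ Set.Ioc (0:ℝ) (R/2), R ^ σ - (R/2) ^ σ ≤ R ^ σ - t ^ σ := by
      intro t ht
      have : t ^ σ ≤ (R/2) ^ σ := Real.rpow_le_rpow ht.1.le ht.2 hσ.le
      linarith
    have hd : (0:ℝ) < R ^ σ - (R/2) ^ σ := by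
      have : (R/2) ^ σ < R ^ σ := Real.rpow_lt_rpow hR2.le (by linarith) hσ
      linarith
    set C : ℝ := (R ^ σ) ^ b + (R ^ σ - (R/2) ^ σ) ^ b with hC
    have hint : IntegrableOn (fun t : ℝ => t ^ a * C) (Set.Ioc 0 (R/2)) := by
      have := (intervalIntegral.intervalIntegrable_rpow' (a := 0) (b := R/2) ha)
      rw [intervalIntegrable_iff, uIoc_of_le hR2.le] at this
      exact this.mul_const C
    apply Integrable.mono' hint
    · exact ((ckn_aux_cont hσ (a := a) (b := b)).mono
        (by intro x hx; exact ⟨hx.1, lt_of_le_of_lt hx.2 (by linarith)⟩)).aestronglyMeasurable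
        measurableSet_Ioc
    · rw [ae_restrict_iff' measurableSet_Ioc]
      filter_upwards with t ht
      have ht0 : 0 < t := ht.1
      have hX : 0 < R ^ σ - t ^ σ := lt_of_lt_of_le hd (hXlb t ht)
      rw [Real.norm_eq_abs, abs_of_nonneg (by positivity)]
      apply mul_le_mul_of_nonneg_left _ (Real.rpow_nonneg ht0.le a)
      rcases le_or_gt 0 b with hb0 | hb0
      · refine le_trans (Real.rpow_le_rpow hX.le (show R ^ σ - t ^ σ ≤ R ^ σ by nlinarith [Real.rpow_pos_of_pos ht0 σ]) hb0) ?_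
        rw [hC]; nlinarith [Real.rpow_pos_of_pos hd b]
      · refine le_trans (Real.rpow_le_rpow_of_nonpos hd (hXlb t ht) hb0.le) ?_
        rw [hC]; nlinarith [Real.rpow_pos_of_pos (Real.rpow_pos_of_pos hR σ) b]
  · -- near R
    obtain ⟨m, hm, hlow⟩ := ckn_aux_lower hR hσ
    set C2 : ℝ := (R/2) ^ a + R ^ a with hC2
    have htC2 : ∀ t ∈ Set.Ioo (R/2) R, t ^ a ≤ C2 := by
      intro t ht
      rcases le_or_gt 0 a with ha0 | ha0
      · refine le_trans (Real.rpow_le_rpow (lt_trans hR2 ht.1).le ht.2.le ha0) ?_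
        rw [hC2]; nlinarith [Real.rpow_pos_of_pos hR2 a]
      · refine le_trans (Real.rpow_le_rpow_of_nonpos hR2 ht.1.le ha0.le) ?_
        rw [hC2]; nlinarith [Real.rpow_pos_of_pos hR a]
    have hC2pos : 0 < C2 := by
      rw [hC2]; positivity
    have hasm : AEStronglyMeasurable (fun t : ℝ => t ^ a * (R ^ σ - t ^ σ) ^ b)
        (volume.restrict (Set.Ioo (R/2) R)) :=
      ((ckn_aux_cont hσ (a := a) (b := b)).mono
        (by intro x hx; exact ⟨lt_trans hR2 hx.1, hx.2⟩)).aestronglyMeasurable measurableSet_Ioo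
    rcases le_or_gt 0 b with hb0 | hb0
    · -- bounded
      have hcst : IntegrableOn (fun _ : ℝ => C2 * (R ^ σ) ^ b) (Set.Ioo (R/2) R) :=
        integrableOn_const measure_Ioo_lt_top.ne
      apply Integrable.mono' hcst hasm
      rw [ae_restrict_iff' measurableSet_Ioo]
      filter_upwards with t ht
      have ht0 : 0 < t := lt_trans hR2 ht.1
      have hX : 0 < R ^ σ - t ^ σ := by
        have : t ^ σ < R ^ σ := Real.rpow_lt_rpow ht0.le ht.2 hσ
        linarith
      rw [Real.norm_eq_abs, abs_of_nonneg (by positivity)]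
      apply mul_le_mul (htC2 t ht)
        (Real.rpow_le_rpow hX.le (by nlinarith [Real.rpow_pos_of_pos ht0 σ]) hb0)
        (by positivity) hC2pos.le
    · -- singular at R
      have hint : IntegrableOn (fun t : ℝ => (R - t) ^ b * (C2 * m ^ b)) (Set.Ioo (R/2) R) := by
        have h0 : IntervalIntegrable (fun x : ℝ => x ^ b) volume 0 (R/2) :=
          intervalIntegral.intervalIntegrable_rpow' (a := 0) (b := R/2) hb
        have h1 := h0.comp_sub_left R
        rw [show R - R/2 = R/2 by ring, show R - 0 = R by ring, intervalIntegrable_iff,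
          uIoc_comm, uIoc_of_le (by linarith)] at h1
        exact (h1.mono_set Set.Ioo_subset_Ioc_self).mul_const _
      apply Integrable.mono' hint hasm
      rw [ae_restrict_iff' measurableSet_Ioo]
      filter_upwards with t ht
      have ht0 : 0 < t := lt_trans hR2 ht.1
      have hRt : 0 < R - t := by linarith [ht.2]
      have hlb : m * (R - t) ≤ R ^ σ - t ^ σ := hlow t ⟨ht.1.le, ht.2.le⟩
      have hX : 0 < R ^ σ - t ^ σ := lt_of_lt_of_le (by positivity) hlb
      rw [Real.norm_eq_abs, abs_of_nonneg (by positivity)]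
      have h2 : (R ^ σ - t ^ σ) ^ b ≤ m ^ b * (R - t) ^ b := by
        rw [← Real.mul_rpow hm.le hRt.le]
        exact Real.rpow_le_rpow_of_nonpos (by positivity) hlb hb0.le
      calc t ^ a * (R ^ σ - t ^ σ) ^ b ≤ C2 * (m ^ b * (R - t) ^ b) :=
            mul_le_mul (htC2 t ht) h2 (by positivity) hC2pos.le
        _ = (R - t) ^ b * (C2 * m ^ b) := by ring

/-- Integration by parts identity for the Beta-type integrals. -/
lemma ckn_aux_ftc {σ A c lam : ℝ} (hσ : 0 < σ) (hA : 0 < A) (hc : 0 < c)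
    (hlam : 0 < lam) :
    ∫ t in Set.Ioo 0 (lam ^ (1/σ)), t ^ (A - 1) * (lam - t ^ σ) ^ c
      = (c * σ / A) * ∫ t in Set.Ioo 0 (lam ^ (1/σ)), t ^ (A + σ - 1) * (lam - t ^ σ) ^ (c - 1) := by
  set R : ℝ := lam ^ (1/σ) with hRdef
  have hR : 0 < R := Real.rpow_pos_of_pos hlam _
  have hRσ : R ^ σ = lam := by
    rw [hRdef, ← Real.rpow_mul hlam.le, one_div_mul_cancel hσ.ne', Real.rpow_one]
  clear_value R
  -- replace lam by R ^ σ
  rw [← hRσ]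
  have hu : IntegrableOn (fun t => t ^ (A - 1) * (R ^ σ - t ^ σ) ^ c) (Set.Ioo 0 R) volume :=
    ckn_aux_int hR hσ (by linarith) (by linarith)
  have hv : IntegrableOn (fun t => t ^ (A + σ - 1) * (R ^ σ - t ^ σ) ^ (c - 1))
      (Set.Ioo 0 R) volume :=
    ckn_aux_int hR hσ (by linarith) (by linarith)
  -- define F and its derivative
  set F : ℝ → ℝ := fun t => t ^ A * (R ^ σ - t ^ σ) ^ c with hF
  set F' : ℝ → ℝ := fun t =>
      A * (t ^ (A - 1) * (R ^ σ - t ^ σ) ^ c)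
        - (c * σ) * (t ^ (A + σ - 1) * (R ^ σ - t ^ σ) ^ (c - 1)) with hF'
  have hderiv : ∀ t ∈ Set.Ioo (0:ℝ) R, HasDerivAt F (F' t) t := by
    intro t ht
    have ht0 : 0 < t := ht.1
    have hX : 0 < R ^ σ - t ^ σ := by
      have : t ^ σ < R ^ σ := Real.rpow_lt_rpow ht0.le ht.2 hσ
      linarith
    have h1 : HasDerivAt (fun t : ℝ => t ^ A) (A * t ^ (A - 1)) t :=
      Real.hasDerivAt_rpow_const (Or.inl ht0.ne')
    have h2 : HasDerivAt (fun t : ℝ => R ^ σ - t ^ σ) (-(σ * t ^ (σ - 1))) t := by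
      simpa using (Real.hasDerivAt_rpow_const (p := σ) (Or.inl ht0.ne')).const_sub (R ^ σ)
    have h3 : HasDerivAt (fun y : ℝ => y ^ c) (c * (R ^ σ - t ^ σ) ^ (c - 1)) (R ^ σ - t ^ σ) :=
      Real.hasDerivAt_rpow_const (Or.inl hX.ne')
    have h4 := (h3.comp t h2)
    have h5 := h1.mul h4
    refine h5.congr_deriv ?_
    have hts : t ^ (A + σ - 1) = t ^ (A) * t ^ (σ - 1) := by
      rw [← Real.rpow_add ht0]; ring_nf
    simp only [hF', Function.comp_def]
    rw [hts]
    ring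
  -- limits
  have ha : Filter.Tendsto F (nhdsWithin 0 (Set.Ioi 0)) (nhds 0) := by
    have c1 : Filter.Tendsto (fun t : ℝ => t ^ A) (nhds 0) (nhds 0) := by
      have := (Real.continuousAt_rpow_const 0 A (Or.inr hA.le)).tendsto
      rwa [Real.zero_rpow hA.ne'] at this
    have c2 : Filter.Tendsto (fun t : ℝ => (R ^ σ - t ^ σ) ^ c) (nhds 0) (nhds ((R ^ σ - 0 ^ σ) ^ c)) := by
      apply ContinuousAt.tendsto
      apply ContinuousAt.rpow_const
      · exact continuousAt_const.sub (Real.continuousAt_rpow_const 0 σ (Or.inr hσ.le))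
      · left
        rw [Real.zero_rpow hσ.ne', sub_zero]
        exact (Real.rpow_pos_of_pos hR σ).ne'
    have := c1.mul c2
    rw [zero_mul] at this
    exact this.mono_left nhdsWithin_le_nhds
  have hb : Filter.Tendsto F (nhdsWithin R (Set.Iio R)) (nhds 0) := by
    have c1 : Filter.Tendsto (fun t : ℝ => t ^ A) (nhds R) (nhds (R ^ A)) :=
      ((Real.continuousAt_rpow_const R A (Or.inl hR.ne')).tendsto)
    have c2 : Filter.Tendsto (fun t : ℝ => (R ^ σ - t ^ σ) ^ c) (nhds R) (nhds 0) := by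
      have : ContinuousAt (fun t : ℝ => (R ^ σ - t ^ σ) ^ c) R := by
        apply ContinuousAt.rpow_const
        · exact continuousAt_const.sub (Real.continuousAt_rpow_const R σ (Or.inl hR.ne'))
        · right; exact hc.le
      have h0 := this.tendsto
      rwa [sub_self, Real.zero_rpow hc.ne'] at h0
    have := c1.mul c2
    rw [mul_zero] at this
    exact this.mono_left nhdsWithin_le_nhds
  have hint : IntervalIntegrable F' volume 0 R := by
    rw [intervalIntegrable_iff, uIoc_of_le hR.le]
    apply Integrable.sub
    · exact ((hu.congr_set_ae Ioo_ae_eq_Ioc.symm).const_mul A)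
    · exact ((hv.congr_set_ae Ioo_ae_eq_Ioc.symm).const_mul (c * σ))
  have hFTC := intervalIntegral.integral_eq_sub_of_hasDerivAt_of_tendsto hR hderiv hint ha hb
  rw [sub_zero, intervalIntegral.integral_of_le hR.le, integral_Ioc_eq_integral_Ioo] at hFTC
  have hsplit : ∫ t in Set.Ioo 0 R, F' t
      = A * (∫ t in Set.Ioo 0 R, t ^ (A - 1) * (R ^ σ - t ^ σ) ^ c)
        - (c * σ) * (∫ t in Set.Ioo 0 R, t ^ (A + σ - 1) * (R ^ σ - t ^ σ) ^ (c - 1)) := by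
    rw [hF']
    rw [integral_sub (hu.const_mul A) (hv.const_mul (c * σ)),
      integral_const_mul, integral_const_mul]
  rw [hsplit] at hFTC
  field_simp
  linarith

lemma ckn_polar {n : ℕ} (hn : 1 ≤ n) (L : ℝ → ℝ) :
    ∫ x : EuclideanSpace ℝ (Fin n), L ‖x‖
      = ((n : ℝ) * (volume (Metric.ball (0 : EuclideanSpace ℝ (Fin n)) 1)).toReal) *
        ∫ t in Set.Ioi (0:ℝ), t ^ (n - 1) * L t := by
  haveI : Nonempty (Fin n) := ⟨⟨0, by omega⟩⟩
  haveI : Nontrivial (EuclideanSpace ℝ (Fin n)) := inferInstance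
  have h := MeasureTheory.integral_fun_norm_addHaar
    (volume : Measure (EuclideanSpace ℝ (Fin n))) L
  rw [h]
  simp only [finrank_euclideanSpace_fin, nsmul_eq_mul, smul_eq_mul, measureReal_def]
  ring

variable {E : Type*} [NormedAddCommGroup E] [InnerProductSpace ℝ E] [CompleteSpace E]

lemma ckn_norm_sq_rpow {σ : ℝ} (y : E) : ((‖y‖ ^ 2 : ℝ)) ^ (σ/2) = ‖y‖ ^ σ := by
  rw [← Real.rpow_natCast ‖y‖ 2, ← Real.rpow_mul (norm_nonneg y)]
  congr 1
  push_cast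
  ring

lemma ckn_rpow_cont {σ : ℝ} (hσ : 0 < σ) : Continuous fun y : E => ‖y‖ ^ σ := by
  rw [continuous_iff_continuousAt]
  intro x
  exact (Real.continuousAt_rpow_const _ σ (Or.inr hσ.le)).comp continuous_norm.continuousAt

lemma ckn_gradient_zero {lam σ q : ℝ} (hσ : 0 < σ) (hq : 0 < q)
    {x : E} (hxR : lam < ‖x‖ ^ σ) :
    gradient (fun y : E => (max (lam - ‖y‖ ^ σ) 0) ^ q) x = 0 := by
  have hU : IsOpen {y : E | lam < ‖y‖ ^ σ} :=
    isOpen_lt continuous_const (ckn_rpow_cont hσ)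
  have heq : (fun y : E => (max (lam - ‖y‖ ^ σ) 0) ^ q) =ᶠ[nhds x] (fun _ => (0:ℝ)) := by
    filter_upwards [hU.mem_nhds hxR] with y hy
    have hy' : lam < ‖y‖ ^ σ := hy
    rw [max_eq_right (by linarith), Real.zero_rpow hq.ne']
  show (InnerProductSpace.toDual ℝ E).symm
    (fderiv ℝ (fun y : E => (max (lam - ‖y‖ ^ σ) 0) ^ q) x) = 0
  rw [heq.fderiv_eq, fderiv_fun_const]
  simp

lemma ckn_gradient {lam σ q : ℝ} (hσ : 0 < σ) (hq : 0 < q)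
    {x : E} (hx0 : x ≠ 0) (hxR : ‖x‖ ^ σ < lam) :
    gradient (fun y : E => (max (lam - ‖y‖ ^ σ) 0) ^ q) x
      = (2 * (q * (lam - ‖x‖ ^ σ) ^ (q-1) * (-((σ/2) * (‖x‖^2 : ℝ) ^ (σ/2 - 1))))) • x := by
  have ht0 : (0:ℝ) < ‖x‖ := norm_pos_iff.2 hx0
  have hs0 : (0:ℝ) < ‖x‖ ^ 2 := by positivity
  have hXpos : 0 < lam - ‖x‖ ^ σ := by linarith
  set φd : ℝ := q * (lam - ‖x‖ ^ σ) ^ (q-1) * (-((σ/2) * (‖x‖^2 : ℝ) ^ (σ/2 - 1))) with hφd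
  have hφ : HasDerivAt (fun s : ℝ => (lam - s ^ (σ/2)) ^ q) φd (‖x‖ ^ 2) := by
    have h2 : HasDerivAt (fun s : ℝ => lam - s ^ (σ/2))
        (-((σ/2) * (‖x‖^2 : ℝ) ^ (σ/2 - 1))) (‖x‖ ^ 2) := by
      simpa using (Real.hasDerivAt_rpow_const (p := σ/2) (Or.inl hs0.ne')).const_sub lam
    have h3 : HasDerivAt (fun y : ℝ => y ^ q)
        (q * (lam - (‖x‖^2 : ℝ) ^ (σ/2)) ^ (q-1)) (lam - (‖x‖^2 : ℝ) ^ (σ/2)) := by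
      apply Real.hasDerivAt_rpow_const
      rw [ckn_norm_sq_rpow]
      exact Or.inl hXpos.ne'
    have h4 := h3.comp (‖x‖^2 : ℝ) h2
    have h4' : HasDerivAt (fun s : ℝ => (lam - s ^ (σ/2)) ^ q)
        (q * (lam - (‖x‖^2:ℝ)^(σ/2)) ^ (q-1) * -((σ/2) * (‖x‖^2:ℝ)^(σ/2-1))) (‖x‖^2) := h4
    rw [ckn_norm_sq_rpow] at h4'
    rw [hφd]
    exact h4'
  have hF : HasFDerivAt (fun y : E => (lam - (‖y‖^2 : ℝ) ^ (σ/2)) ^ q)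
      (φd • ((2:ℕ) • (innerSL ℝ x))) x :=
    by have h := hφ.comp_hasFDerivAt x (hasStrictFDerivAt_norm_sq x).hasFDerivAt; exact h
  have heq : (fun y : E => (max (lam - ‖y‖ ^ σ) 0) ^ q)
      =ᶠ[nhds x] (fun y : E => (lam - (‖y‖^2 : ℝ) ^ (σ/2)) ^ q) := by
    have hU : IsOpen {y : E | ‖y‖ ^ σ < lam} :=
      isOpen_lt (ckn_rpow_cont hσ) continuous_const
    filter_upwards [hU.mem_nhds hxR] with y hy
    have hy' : ‖y‖ ^ σ < lam := hy
    rw [ckn_norm_sq_rpow, max_eq_left (by linarith)]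
  have hF' : HasFDerivAt (fun y : E => (max (lam - ‖y‖ ^ σ) 0) ^ q)
      (φd • ((2:ℕ) • (innerSL ℝ x))) x := hF.congr_of_eventuallyEq heq
  have hgrad := hF'.hasGradientAt.gradient
  rw [hgrad]
  have hdual : (InnerProductSpace.toDual ℝ E).symm (innerSL ℝ x) = x := by
    have h6 : InnerProductSpace.toDual ℝ E x = innerSL ℝ x := by
      ext y; simp [InnerProductSpace.toDual_apply_apply]
    rw [← h6, LinearIsometryEquiv.symm_apply_apply]
  rw [_root_.map_smul, map_nsmul, hdual]
  rw [show ((2:ℕ) • x) = (2:ℝ) • x by simp [two_smul], smul_smul]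
  congr 1
  ring

lemma ckn_gradient_norm {lam σ q : ℝ} (hσ : 0 < σ) (hq : 0 < q)
    {x : E} (hx0 : x ≠ 0) (hxR : ‖x‖ ^ σ < lam) :
    ‖gradient (fun y : E => (max (lam - ‖y‖ ^ σ) 0) ^ q) x‖
      = q * σ * ‖x‖ ^ (σ - 1) * (lam - ‖x‖ ^ σ) ^ (q - 1) := by
  have ht0 : (0:ℝ) < ‖x‖ := norm_pos_iff.2 hx0
  have hXpos : 0 < lam - ‖x‖ ^ σ := by linarith
  rw [ckn_gradient hσ hq hx0 hxR, norm_smul]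
  have hs : ((‖x‖^2 : ℝ)) ^ (σ/2 - 1) = ‖x‖ ^ (σ - 2) := by
    rw [← Real.rpow_natCast ‖x‖ 2, ← Real.rpow_mul (norm_nonneg x)]
    congr 1; push_cast; ring
  rw [hs, Real.norm_eq_abs,
    show 2 * (q * (lam - ‖x‖ ^ σ) ^ (q-1) * (-((σ/2) * ‖x‖ ^ (σ - 2))))
      = -(q * σ * ((lam - ‖x‖ ^ σ) ^ (q-1) * ‖x‖ ^ (σ - 2))) by ring,
    abs_neg, abs_of_nonneg (by positivity),
    show ‖x‖ ^ (σ - 1) = ‖x‖ ^ (σ - 2) * ‖x‖ by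
      rw [← Real.rpow_add_one ht0.ne']; congr 1; ring]
  ring

open Real MeasureTheory

/-- The compactly supported functions `f(x) = (λ − |x|^{1+α−β/p})_+^{(p−1)/(p−r)}` are
extremal for the CKN inequality in the regime `0 < r < p`, `r ≠ 1`. -/
theorem ckn_extremal_r_lt_p
    (n : ℕ) (hn : 2 ≤ n) (p r α β γ : ℝ) (hp : 1 < p) (hr0 : 0 < r) (hrp : r < p)
    (hr1 : r ≠ 1)
    (h1 : 0 < 1/r - γ/n) (h2 : 0 < 1/p - α/n) (h3 : 0 < 1 - β/n)
    (hbal : γ = (1+α)/r + ((p-1)/(p*r)) * β)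
    (hσ : 0 < 1 + α - β/p)
    (lam : ℝ) (hlam : 0 < lam)
    (f : EuclideanSpace ℝ (Fin n) → ℝ)
    (hf : f = fun x => (max (lam - ‖x‖ ^ (1 + α - β/p)) 0) ^ ((p-1)/(p-r))) :
    ∫ x : EuclideanSpace ℝ (Fin n), |f x| ^ r * ‖x‖ ^ (-(γ * r)) =
      (r / (n - γ * r)) *
        (∫ x : EuclideanSpace ℝ (Fin n), ‖gradient f x‖ ^ p * ‖x‖ ^ (-(α * p))) ^ (1/p) *
        (∫ x in Function.support f,
            |f x| ^ (p * (r-1)/(p-1)) * ‖x‖ ^ (-β)) ^ ((p-1)/p) := by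
  have hn1 : 1 ≤ n := by omega
  haveI : Nonempty (Fin n) := ⟨⟨0, by omega⟩⟩
  haveI : Nontrivial (EuclideanSpace ℝ (Fin n)) := inferInstance
  have hn0 : (0:ℝ) < n := by
    have : (2:ℝ) ≤ n := by exact_mod_cast hn
    linarith
  set σ := 1 + α - β/p with hσdef
  set q := (p-1)/(p-r) with hqdef
  have hp0 : (0:ℝ) < p := by linarith
  have hpr : (0:ℝ) < p - r := by linarith
  have hp1 : (0:ℝ) < p - 1 := by linarith
  have hq : 0 < q := div_pos hp1 hpr
  set R := lam ^ (1/σ) with hRdef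
  have hR : 0 < R := Real.rpow_pos_of_pos hlam _
  have hRσ : R ^ σ = lam := by
    rw [hRdef, ← Real.rpow_mul hlam.le, one_div_mul_cancel hσ.ne', Real.rpow_one]
  have hγr : γ * r = σ + β := by
    rw [hbal, hσdef]
    field_simp
    ring
  have hA : 0 < (n:ℝ) - γ * r := by
    have h1' : γ / n < 1 / r := by linarith
    rw [div_lt_div_iff₀ hn0 hr0] at h1'
    linarith
  have hβ : β < n := by
    have h3' : β / n < 1 := by linarith
    rw [div_lt_one hn0] at h3'
    exact h3'
  have hlt : ∀ t : ℝ, 0 ≤ t → (t < R ↔ t ^ σ < lam) := by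
    intro t ht
    constructor
    · intro h
      rw [← hRσ]
      exact Real.rpow_lt_rpow ht h hσ
    · intro h
      by_contra hc
      push_neg at hc
      have := Real.rpow_le_rpow hR.le hc hσ.le
      rw [hRσ] at this
      linarith
  set g := fun t : ℝ => (max (lam - t ^ σ) 0) ^ q with hgdef
  have hfg : f = fun x => g ‖x‖ := hf
  have hgpos : ∀ t : ℝ, 0 ≤ t → t < R → g t = (lam - t ^ σ) ^ q := by
    intro t ht htR
    rw [hgdef]
    simp only [max_eq_left (by have := (hlt t ht).1 htR; linarith : (0:ℝ) ≤ lam - t ^ σ)]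
  have hgzero : ∀ t : ℝ, 0 ≤ t → R ≤ t → g t = 0 := by
    intro t ht htR
    have : ¬ (t < R) := not_lt.2 htR
    rw [hlt t ht] at this
    rw [hgdef]
    simp only [max_eq_right (by linarith : lam - t ^ σ ≤ 0)]
    exact Real.zero_rpow hq.ne'
  -- support of f
  have hsupp : Function.support f = {x : EuclideanSpace ℝ (Fin n) | ‖x‖ < R} := by
    ext x
    simp only [Function.mem_support, Set.mem_setOf_eq, hfg]
    constructor
    · intro h
      by_contra hc
      push_neg at hc
      exact h (hgzero _ (norm_nonneg x) hc)
    · intro h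
      rw [hgpos _ (norm_nonneg x) h]
      have := (hlt _ (norm_nonneg x)).1 h
      exact (Real.rpow_pos_of_pos (by linarith) q).ne'
  have hsupp_meas : MeasurableSet (Function.support f) := by
    rw [hsupp]
    exact (isOpen_lt continuous_norm continuous_const).measurableSet
  -- constants
  set c0 : ℝ := (n : ℝ) * (volume (Metric.ball (0 : EuclideanSpace ℝ (Fin n)) 1)).toReal with hc0
  set e' : ℝ := p * (r-1)/(p-1) with he'
  have hqe' : q * e' = q * r - 1 := by
    rw [hqdef, he']
    field_simp
    ring
  have hqp : (q - 1) * p = q * r - 1 := by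
    rw [hqdef]
    field_simp
    ring
  have hσβ : (σ - 1) * p + -(α * p) = -β := by
    rw [hσdef]
    field_simp
    ring
  have hnat : ∀ t : ℝ, (t ^ (n-1 : ℕ) : ℝ) = t ^ ((n:ℝ) - 1) := by
    intro t
    rw [← Real.rpow_natCast t (n-1), Nat.cast_sub hn1, Nat.cast_one]
  -- LHS reduction
  have hLHS : (∫ x : EuclideanSpace ℝ (Fin n), |f x| ^ r * ‖x‖ ^ (-(γ * r)))
      = c0 * ∫ t in Set.Ioo 0 R, t ^ (((n:ℝ) - γ * r) - 1) * (lam - t ^ σ) ^ (q * r) := by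
    have h0 : (∫ x : EuclideanSpace ℝ (Fin n), |f x| ^ r * ‖x‖ ^ (-(γ * r)))
        = ∫ x : EuclideanSpace ℝ (Fin n), (fun t : ℝ => |g t| ^ r * t ^ (-(γ * r))) ‖x‖ := by
      simp only [hfg]
    rw [h0, ckn_polar hn1 (fun t : ℝ => |g t| ^ r * t ^ (-(γ * r)))]
    rw [hc0]
    congr 1
    have heq : Set.EqOn (fun t : ℝ => t ^ (n-1:ℕ) * ((fun t : ℝ => |g t| ^ r * t ^ (-(γ * r))) t))
        (Set.indicator (Set.Iio R) (fun t => t ^ (((n:ℝ) - γ*r) - 1) * (lam - t ^ σ) ^ (q * r)))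
        (Set.Ioi 0) := by
      intro t ht
      have ht0 : (0:ℝ) < t := ht
      simp only
      by_cases htR : t < R
      · rw [Set.indicator_of_mem (show t ∈ Set.Iio R from htR)]
        have hX : 0 < lam - t ^ σ := by have := (hlt t ht0.le).1 htR; linarith
        rw [hgpos t ht0.le htR, abs_of_nonneg (Real.rpow_nonneg hX.le q),
          ← Real.rpow_mul hX.le, hnat t]
        rw [show ((n:ℝ)) - γ*r - 1 = ((n:ℝ) - 1) + (-(γ*r)) by ring, Real.rpow_add ht0]
        ring
      · rw [Set.indicator_of_notMem (show t ∉ Set.Iio R from htR), hgzero t ht0.le (not_lt.1 htR), abs_zero,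
          Real.zero_rpow hr0.ne']
        ring
    rw [setIntegral_congr_fun measurableSet_Ioi heq,
      setIntegral_indicator measurableSet_Iio, Set.Ioi_inter_Iio]
  -- B reduction
  have hBind : ∀ x : EuclideanSpace ℝ (Fin n),
      (Function.support f).indicator (fun x => |f x| ^ e' * ‖x‖ ^ (-β)) x
        = (fun t : ℝ => Set.indicator (Set.Iio R)
            (fun t => ((lam - t^σ) ^ q) ^ e' * t ^ (-β)) t) ‖x‖ := by
    intro x
    simp only
    by_cases hx : ‖x‖ < R
    · rw [Set.indicator_of_mem (show x ∈ Function.support f by rw [hsupp]; exact hx), Set.indicator_of_mem (show ‖x‖ ∈ Set.Iio R from hx)]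
      have hX : 0 ≤ lam - ‖x‖ ^ σ := by
        have := (hlt _ (norm_nonneg x)).1 hx; linarith
      simp only [hfg]
      rw [hgpos _ (norm_nonneg x) hx, abs_of_nonneg (Real.rpow_nonneg hX q)]
    · rw [Set.indicator_of_notMem (show x ∉ Function.support f by rw [hsupp]; exact hx), Set.indicator_of_notMem (show ‖x‖ ∉ Set.Iio R from hx)]
  have hB : (∫ x in Function.support f, |f x| ^ e' * ‖x‖ ^ (-β))
      = c0 * ∫ t in Set.Ioo 0 R, t ^ (((n:ℝ) - γ*r) + σ - 1) * (lam - t ^ σ) ^ (q*r - 1) := by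
    rw [← integral_indicator hsupp_meas]
    rw [show (fun x : EuclideanSpace ℝ (Fin n) =>
          (Function.support f).indicator (fun x => |f x| ^ e' * ‖x‖ ^ (-β)) x)
        = (fun x : EuclideanSpace ℝ (Fin n) => (fun t : ℝ => Set.indicator (Set.Iio R)
            (fun t => ((lam - t^σ) ^ q) ^ e' * t ^ (-β)) t) ‖x‖) from funext hBind]
    rw [ckn_polar hn1 (fun t : ℝ => Set.indicator (Set.Iio R)
            (fun t => ((lam - t^σ) ^ q) ^ e' * t ^ (-β)) t), hc0]
    congr 1
    have heq : Set.EqOn (fun t : ℝ => t ^ (n-1:ℕ) * ((fun t : ℝ => Set.indicator (Set.Iio R)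
            (fun t => ((lam - t^σ) ^ q) ^ e' * t ^ (-β)) t) t))
        (Set.indicator (Set.Iio R)
          (fun t => t ^ (((n:ℝ) - γ*r) + σ - 1) * (lam - t ^ σ) ^ (q*r - 1)))
        (Set.Ioi 0) := by
      intro t ht
      have ht0 : (0:ℝ) < t := ht
      simp only
      by_cases htR : t < R
      · rw [Set.indicator_of_mem (show t ∈ Set.Iio R from htR), Set.indicator_of_mem (show t ∈ Set.Iio R from htR)]
        have hX : 0 < lam - t ^ σ := by have := (hlt t ht0.le).1 htR; linarith
        rw [← Real.rpow_mul hX.le, hqe', hnat t]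
        rw [show ((n:ℝ) - γ*r) + σ - 1 = ((n:ℝ) - 1) + (-β) by
          rw [hγr]; ring, Real.rpow_add ht0]
        ring
      · rw [Set.indicator_of_notMem (show t ∉ Set.Iio R from htR), Set.indicator_of_notMem (show t ∉ Set.Iio R from htR)]
        ring
    rw [setIntegral_congr_fun measurableSet_Ioi heq,
      setIntegral_indicator measurableSet_Iio, Set.Ioi_inter_Iio]
  -- gradient reduction
  have hM : ∀ᵐ x : EuclideanSpace ℝ (Fin n), ‖gradient f x‖ ^ p * ‖x‖ ^ (-(α * p))
      = (fun t : ℝ => (if t < R then q*σ*t^(σ-1)*(lam - t^σ)^(q-1) else 0) ^ p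
          * t ^ (-(α*p))) ‖x‖ := by
    have hnull : volume (Metric.sphere (0:EuclideanSpace ℝ (Fin n)) R
        ∪ Metric.sphere (0:EuclideanSpace ℝ (Fin n)) 0) = 0 := by
      apply measure_union_null <;> exact Measure.addHaar_sphere volume 0 _
    filter_upwards [measure_eq_zero_iff_ae_notMem.1 hnull] with x hx
    simp only [Set.mem_union, mem_sphere_zero_iff_norm, not_or] at hx
    obtain ⟨hxR, hx0⟩ := hx
    have hx0' : x ≠ 0 := by simpa using hx0
    show ‖gradient f x‖ ^ p * ‖x‖ ^ (-(α * p))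
      = (if ‖x‖ < R then q*σ*‖x‖^(σ-1)*(lam - ‖x‖^σ)^(q-1) else 0) ^ p * ‖x‖ ^ (-(α*p))
    rcases lt_trichotomy ‖x‖ R with hcase | hcase | hcase
    · rw [if_pos hcase, hf,
        ckn_gradient_norm hσ hq hx0' ((hlt _ (norm_nonneg x)).1 hcase)]
    · exact absurd hcase hxR
    · have hgt : lam < ‖x‖ ^ σ := by
        rw [← hRσ]
        exact Real.rpow_lt_rpow hR.le hcase hσ
      rw [if_neg (not_lt.2 hcase.le), hf, ckn_gradient_zero hσ hq hgt, norm_zero]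
  have hGrad : (∫ x : EuclideanSpace ℝ (Fin n), ‖gradient f x‖ ^ p * ‖x‖ ^ (-(α * p)))
      = c0 * ((q*σ)^p *
        ∫ t in Set.Ioo 0 R, t ^ (((n:ℝ) - γ*r) + σ - 1) * (lam - t ^ σ) ^ (q*r - 1)) := by
    rw [integral_congr_ae hM, ckn_polar hn1 (fun t : ℝ =>
      (if t < R then q*σ*t^(σ-1)*(lam - t^σ)^(q-1) else 0) ^ p * t ^ (-(α*p))), hc0]
    congr 1
    have heq : Set.EqOn (fun t : ℝ => t ^ (n-1:ℕ) *
          ((fun t : ℝ => (if t < R then q*σ*t^(σ-1)*(lam - t^σ)^(q-1) else 0) ^ p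
            * t ^ (-(α*p))) t))
        (Set.indicator (Set.Iio R)
          (fun t => (q*σ)^p * (t ^ (((n:ℝ) - γ*r) + σ - 1) * (lam - t ^ σ) ^ (q*r - 1))))
        (Set.Ioi 0) := by
      intro t ht
      have ht0 : (0:ℝ) < t := ht
      simp only
      by_cases htR : t < R
      · rw [if_pos htR, Set.indicator_of_mem (show t ∈ Set.Iio R from htR)]
        have hX : 0 < lam - t ^ σ := by have := (hlt t ht0.le).1 htR; linarith
        rw [show q*σ*t^(σ-1)*(lam - t^σ)^(q-1)
            = (q*σ) * (t^(σ-1) * (lam - t^σ)^(q-1)) by ring]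
        rw [Real.mul_rpow (x := q*σ) (y := t^(σ-1) * (lam - t^σ)^(q-1))
            (by positivity) (by positivity),
          Real.mul_rpow (x := t^(σ-1)) (y := (lam - t^σ)^(q-1))
            (by positivity) (by positivity)]
        have e1 : (t^(σ-1))^p = t ^ ((σ-1)*p) := (Real.rpow_mul ht0.le (σ-1) p).symm
        have e2 : ((lam - t^σ)^(q-1))^p = (lam - t^σ) ^ (q*r-1) := by
          rw [← Real.rpow_mul hX.le, hqp]
        have e3 : t ^ (((n:ℝ) - γ*r) + σ - 1)
            = t ^ (n-1:ℕ) * (t ^ ((σ-1)*p) * t ^ (-(α*p))) := by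
          rw [hnat, ← Real.rpow_add ht0, ← Real.rpow_add ht0]
          congr 1
          have h4 := hσβ
          have h5 := hγr
          linarith
        rw [e1, e2, e3]
        ring
      · rw [if_neg htR, Set.indicator_of_notMem (show t ∉ Set.Iio R from htR), Real.zero_rpow hp0.ne']
        ring
    rw [setIntegral_congr_fun measurableSet_Ioi heq,
      setIntegral_indicator measurableSet_Iio, Set.Ioi_inter_Iio, integral_const_mul]
  -- FTC
  have hFTC := ckn_aux_ftc (σ := σ) (A := (n:ℝ) - γ*r) (c := q*r) hσ hA
    (by positivity) hlam
  rw [← hRdef] at hFTC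
  -- assemble
  have hBnn : 0 ≤ c0 * ∫ t in Set.Ioo 0 R,
      t ^ (((n:ℝ) - γ*r) + σ - 1) * (lam - t ^ σ) ^ (q*r - 1) := by
    rw [← hB]
    exact setIntegral_nonneg hsupp_meas (fun x _ => by positivity)
  set B1 : ℝ := ∫ t in Set.Ioo 0 R,
      t ^ (((n:ℝ) - γ*r) + σ - 1) * (lam - t ^ σ) ^ (q*r - 1) with hB1def
  rw [hLHS, hGrad, hB, hFTC]
  have hstep : (c0 * ((q*σ)^p * B1)) ^ ((1:ℝ)/p) * (c0 * B1) ^ ((p-1)/p)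
      = (q*σ) * (c0 * B1) := by
    rw [show c0 * ((q*σ)^p * B1) = (q*σ)^p * (c0 * B1) by ring,
      Real.mul_rpow (Real.rpow_nonneg (by positivity) p) hBnn,
      ← Real.rpow_mul (by positivity : (0:ℝ) ≤ q*σ), mul_one_div_cancel hp0.ne',
      Real.rpow_one, mul_assoc,
      ← Real.rpow_add' hBnn (by rw [show (1:ℝ)/p + (p-1)/p = 1 by field_simp; ring]; norm_num),
      show (1:ℝ)/p + (p-1)/p = 1 by field_simp; ring, Real.rpow_one]
  rw [show r / ((n:ℝ) - γ*r) * (c0 * ((q*σ)^p * B1)) ^ ((1:ℝ)/p) * (c0*B1) ^ ((p-1)/p)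
      = r / ((n:ℝ) - γ*r) * ((c0 * ((q*σ)^p * B1)) ^ ((1:ℝ)/p) * (c0*B1) ^ ((p-1)/p)) by ring,
    hstep]
  field_simp
end
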